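/- For integers t, l with 0 ≤ l ≤ n and v ∈ ℤ_p^×, one has the matrix identity g_{t,l,v} = n(-v^{-1} p^{l+t}) · z(v p^{-l}) · g_{t+2l-n, n-l, -v} · [[1, 0],[0, v^{-2}]] · w_n, where w_n = z(p^n)·a(p^{-n})·w and g_{t,l,v} = a(p^t)·w·n(v p^{-l}). -/

import Mathlib

open Matrix

set_option maxHeartbeats 1000000 in
/-- For integers `t, l` with `0 ≤ l ≤ n` and `v ∈ ℤ_pˣ`, the matrix identity
`g_{t,l,v} = n(-v⁻¹ p^{l+t}) · z(v p^{-l}) · g_{t+2l-n, n-l, -v} · [[1,0],[0,v⁻²]] · w_n`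
holds over `ℚ_p`, where `w_n = z(p^n)·a(p^{-n})·w` and `g_{t,l,v} = a(p^t)·w·n(v p^{-l})`. -/
theorem atkin_lehner_matrix_identity (p : ℕ) [Fact p.Prime] (t l n : ℤ)
    (hl : 0 ≤ l) (hln : l ≤ n) (v : ℤ_[p]ˣ) :
    !![(p : ℚ_[p]) ^ t, 0; 0, 1] * !![0, 1; -1, 0] *
        !![1, ((v : ℤ_[p]) : ℚ_[p]) * (p : ℚ_[p]) ^ (-l); 0, 1]
      = !![1, -((((v⁻¹ : ℤ_[p]ˣ) : ℤ_[p]) : ℚ_[p]) * (p : ℚ_[p]) ^ (l + t)); 0, 1] *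
        Matrix.scalar (Fin 2) (((v : ℤ_[p]) : ℚ_[p]) * (p : ℚ_[p]) ^ (-l)) *
        (!![(p : ℚ_[p]) ^ (t + 2 * l - n), 0; 0, 1] * !![0, 1; -1, 0] *
          !![1, -((v : ℤ_[p]) : ℚ_[p]) * (p : ℚ_[p]) ^ (-(n - l)); 0, 1]) *
        !![1, 0; 0, (((v⁻¹ : ℤ_[p]ˣ) : ℤ_[p]) : ℚ_[p]) ^ 2] *
        (Matrix.scalar (Fin 2) ((p : ℚ_[p]) ^ n) * !![(p : ℚ_[p]) ^ (-n), 0; 0, 1] *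
          !![0, 1; -1, 0]) := by
  have hp : (p : ℚ_[p]) ≠ 0 := Nat.cast_ne_zero.mpr (Fact.out (p := p.Prime)).ne_zero
  set a : ℚ_[p] := ((v : ℤ_[p]) : ℚ_[p]) with ha
  set b : ℚ_[p] := (((v⁻¹ : ℤ_[p]ˣ) : ℤ_[p]) : ℚ_[p]) with hb
  have hab : a * b = 1 := by
    rw [ha, hb, ← PadicInt.coe_mul]
    simp
  have ha0 : a ≠ 0 := left_ne_zero_of_mul_eq_one hab
  have hb' : b = a⁻¹ := eq_inv_of_mul_eq_one_left (by rw [mul_comm]; exact hab)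
  have hscalar : ∀ c : ℚ_[p], Matrix.scalar (Fin 2) c = !![c, 0; 0, c] := by
    intro c
    ext i j
    fin_cases i <;> fin_cases j <;> simp [Matrix.scalar_apply, Matrix.one_apply]
  have hpl : (p : ℚ_[p]) ^ l ≠ 0 := zpow_ne_zero l hp
  have hpn : (p : ℚ_[p]) ^ n ≠ 0 := zpow_ne_zero n hp
  rw [hscalar, hscalar, hb']
  simp only [Matrix.mul_fin_two]
  simp only [two_mul]
  simp only [zpow_add₀ hp, zpow_sub₀ hp, _root_.zpow_neg]
  ext i j
  fin_cases i <;> fin_cases j <;>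
    simp only [Matrix.cons_val', Matrix.cons_val_zero, Matrix.cons_val_one, Matrix.head_cons,
      Matrix.empty_val', Matrix.cons_val_fin_one, Matrix.head_fin_const, Matrix.of_apply,
        Fin.zero_eta, Fin.mk_one] <;>
    field_simp [ha0, hpl, hpn] <;>
    ring
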